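/- Let p > q > 0 be coprime integers with Bezout chain (p₀, q₀), …, (p_n, q_n). Then the sequence of rationals −p₀/q₀, −p₁/q₁, …, −p_n/q_n is a path in the Farey graph from −p/q to −1 all of whose vertices lie in the closed interval [−p/q, −1]. Moreover, every path in the Farey graph from −p/q to −1 all of whose vertices lie in [−p/q, −1] has length at least n, and the unique such path of length n is the one above. -/

import Mathlib

/-- `(p′, q′)` is the Bezout successor of `(p, q)`:
`p q′ − q p′ = 1`, `0 < p′ < p`, `0 < q′ ≤ q`. -/
def BezoutNext (p q p' q' : ℤ) : Prop :=
  p * q' - q * p' = 1 ∧ 0 < p' ∧ p' < p ∧ 0 < q' ∧ q' ≤ q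

/-- `P 0 = (p, q), …, P n = (1, 1)` is the Bezout chain of `(p, q)`: each step
is the Bezout successor, and `(1, 1)` is reached exactly at step `n`. -/
def IsBezoutChain (p q : ℤ) (n : ℕ) (P : ℕ → ℤ × ℤ) : Prop :=
  P 0 = (p, q) ∧ P n = (1, 1) ∧ (∀ i < n, P i ≠ (1, 1)) ∧
  ∀ i < n, BezoutNext (P i).1 (P i).2 (P (i + 1)).1 (P (i + 1)).2

/-- Two distinct rationals `a/b` and `c/d` (in lowest terms, `b, d > 0`) are
adjacent in the Farey graph iff `|a d − b c| = 1`. -/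
def FareyAdj (x y : ℚ) : Prop :=
  x ≠ y ∧ (x.num * (y.den : ℤ) - y.num * (x.den : ℤ)).natAbs = 1

/-- The chainSlope `−pᵢ/qᵢ` associated to the `i`-th pair of a chain. -/
def chainSlope (P : ℕ → ℤ × ℤ) (i : ℕ) : ℚ :=
  -((P i).1 : ℚ) / ((P i).2 : ℚ)

/-- Counting function: the number of chain slopes strictly below `y`. -/
def gcount (P : ℕ → ℤ × ℤ) (n : ℕ) (y : ℚ) : ℕ :=
  ((Finset.range (n + 1)).filter (fun k => chainSlope P k < y)).card

private lemma slope_eq {a b : ℤ} (hb : 0 < b) (h : Int.gcd a b = 1) :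
    (-(a : ℚ) / (b : ℚ)).num = -a ∧ (((-(a : ℚ) / (b : ℚ)).den : ℤ)) = b := by
  have hcop : Nat.Coprime (-a).natAbs b.natAbs := by
    rw [Int.natAbs_neg]; exact h
  have hcast : -(a : ℚ) / (b : ℚ) = ((-a : ℤ) : ℚ) / ((b : ℤ) : ℚ) := by push_cast; ring
  rw [hcast]
  exact ⟨Rat.num_div_eq_of_coprime hb hcop, Rat.den_div_eq_of_coprime hb hcop⟩

private lemma slope_lt_slope {a b c d : ℤ} (hb : 0 < b) (hd : 0 < d) (h : c * b < a * d) :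
    -(a : ℚ) / (b : ℚ) < -(c : ℚ) / (d : ℚ) := by
  have hb' : (0 : ℚ) < (b : ℚ) := by exact_mod_cast hb
  have hd' : (0 : ℚ) < (d : ℚ) := by exact_mod_cast hd
  rw [div_lt_div_iff₀ hb' hd']
  have h' : ((c : ℚ)) * (b : ℚ) < (a : ℚ) * (d : ℚ) := by exact_mod_cast h
  linarith

private lemma cross_int {a b c d e f g h : ℤ}
    (h1 : c * b - a * d = 1) (h2 : f * g - e * h = 1 ∨ f * g - e * h = -1)
    (hru : a * f < e * b) (hus : e * d < c * f) (hsv : c * h < g * d)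
    (hrv : a * h < g * b) : False := by
  have key : e * h - f * g =
      -((c * f - e * d) * (g * b - a * h)) - (e * b - a * f) * (g * d - c * h) := by
    linear_combination (f * g - e * h) * h1
  have p1 : 0 < (c * f - e * d) * (g * b - a * h) := mul_pos (by linarith) (by linarith)
  have p2 : 0 < (e * b - a * f) * (g * d - c * h) := mul_pos (by linarith) (by linarith)
  rcases h2 with h2 | h2 <;> linarith

private lemma farey_cross {r u s v : ℚ} (h1 : FareyAdj r s) (h2 : FareyAdj u v)
    (hru : r < u) (hus : u < s) (hsv : s < v) : False := by
  have hrs : r < s := hru.trans hus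
  have hrv : r < v := hrs.trans hsv
  rw [Rat.lt_iff] at hru hus hsv hrv hrs
  obtain ⟨-, h1'⟩ := h1
  obtain ⟨-, h2'⟩ := h2
  rw [Int.natAbs_eq_iff] at h1' h2'
  have h1c : s.num * (r.den : ℤ) - r.num * (s.den : ℤ) = 1 := by
    rcases h1' with h | h <;> push_cast at h <;> linarith
  have h2c : (u.den : ℤ) * v.num - u.num * (v.den : ℤ) = 1 ∨
      (u.den : ℤ) * v.num - u.num * (v.den : ℤ) = -1 := by
    rcases h2' with h | h
    · exact Or.inr (by push_cast at h; linarith)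
    · exact Or.inl (by push_cast at h; linarith)
  exact cross_int h1c h2c hru hus hsv hrv

private lemma neighbor_le {a b a' b' : ℤ} (hb : 0 < b) (hab : Int.gcd a b = 1)
    (heq : a * b' - b * a' = 1) (ha'0 : 0 < a') (ha'a : a' < a) (hb'0 : 0 < b')
    {z : ℚ} (hadj : FareyAdj (-(a : ℚ) / (b : ℚ)) z) (hlt : -(a : ℚ) / (b : ℚ) < z)
    (hz1 : z ≤ -1) : z ≤ -(a' : ℚ) / (b' : ℚ) := by
  obtain ⟨hnum, hden⟩ := slope_eq hb hab
  obtain ⟨-, hcr⟩ := hadj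
  rw [Rat.lt_iff, hnum, hden] at hlt
  rw [hnum, hden] at hcr
  rw [Int.natAbs_eq_iff] at hcr
  have hae : a * (z.den : ℤ) + z.num * b = 1 := by
    rcases hcr with h | h <;> push_cast at h <;> linarith
  have hz1' : z.num ≤ -(z.den : ℤ) := by
    rw [Rat.le_iff] at hz1
    simpa using hz1
  have he0 : (0 : ℤ) < (z.den : ℤ) := by exact_mod_cast z.den_pos
  have hc1 : 1 ≤ -z.num := by linarith
  have hcop : IsCoprime a b := Int.isCoprime_iff_gcd_eq_one.mpr hab
  have hkey : a * ((z.den : ℤ) - b') = b * ((-z.num) - a') := by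
    linear_combination hae - heq
  have hdvd : a ∣ ((-z.num) - a') :=
    hcop.dvd_of_dvd_mul_left ⟨(z.den : ℤ) - b', hkey.symm⟩
  obtain ⟨t, ht⟩ := hdvd
  have ha0 : a ≠ 0 := by linarith
  have he' : (z.den : ℤ) - b' = b * t := by
    apply mul_left_cancel₀ ha0
    linear_combination hkey + b * ht
  have ht0 : 0 ≤ t := by
    by_contra hneg
    push_neg at hneg
    have hmul : a * t ≤ a * (-1) := mul_le_mul_of_nonneg_left (by omega) (by linarith)
    linarith [ht]
  have hab' : Int.gcd a' b' = 1 :=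
    Int.isCoprime_iff_gcd_eq_one.mp ⟨-b, a, by linear_combination heq⟩
  obtain ⟨hnum', hden'⟩ := slope_eq hb'0 hab'
  rw [Rat.le_iff, hnum', hden']
  have hval : (-z.num) * b' - a' * (z.den : ℤ) = t := by
    linear_combination b' * ht + (-a') * he' + t * heq
  nlinarith [hval, ht0]

theorem stmt6 (p q : ℤ) (hq : 0 < q) (hqp : q < p) (hco : Int.gcd p q = 1)
    (n : ℕ) (P : ℕ → ℤ × ℤ) (hchain : IsBezoutChain p q n P) :
    (∀ i < n, FareyAdj (chainSlope P i) (chainSlope P (i + 1))) ∧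
    (∀ i ≤ n, -(p : ℚ) / (q : ℚ) ≤ chainSlope P i ∧ chainSlope P i ≤ -1) ∧
    (∀ (m : ℕ) (f : ℕ → ℚ),
      f 0 = -(p : ℚ) / (q : ℚ) → f m = -1 →
      (∀ i < m, FareyAdj (f i) (f (i + 1))) →
      (∀ i ≤ m, -(p : ℚ) / (q : ℚ) ≤ f i ∧ f i ≤ -1) →
      n ≤ m ∧ (m = n → ∀ i ≤ n, f i = chainSlope P i)) := by
  obtain ⟨hP0, hPn, hPne, hPstep⟩ := hchain
  -- basic facts about the chain pairs
  have hfacts : ∀ i, i ≤ n → 0 < (P i).2 ∧ (P i).2 ≤ (P i).1 ∧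
      Int.gcd (P i).1 (P i).2 = 1 ∧ (i < n → (P i).2 < (P i).1) := by
    intro i
    induction i with
    | zero =>
      intro _
      rw [hP0]
      exact ⟨hq, le_of_lt hqp, hco, fun _ => hqp⟩
    | succ i ih =>
      intro hi1
      have hi : i < n := Nat.lt_of_lt_of_le (Nat.lt_succ_self i) hi1
      obtain ⟨hbpos, hble, hgcd, hstrict⟩ := ih (le_of_lt hi)
      obtain ⟨heq, ha'0, ha'a, hb'0, hb'b⟩ := hPstep i hi
      have hba : (P i).2 < (P i).1 := hstrict hi
      have hgcd' : Int.gcd (P (i+1)).1 (P (i+1)).2 = 1 :=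
        Int.isCoprime_iff_gcd_eq_one.mp ⟨-(P i).2, (P i).1, by linear_combination heq⟩
      have hb'a' : (P (i+1)).2 ≤ (P (i+1)).1 := by
        by_contra hcon
        push_neg at hcon
        nlinarith [mul_le_mul_of_nonneg_right
            (show (P i).2 + 1 ≤ (P i).1 by linarith) (show (0:ℤ) ≤ (P (i+1)).2 by linarith),
          mul_le_mul_of_nonneg_left
            (show (P (i+1)).1 + 1 ≤ (P (i+1)).2 by linarith) (show (0:ℤ) ≤ (P i).2 by linarith)]
      refine ⟨hb'0, hb'a', hgcd', ?_⟩
      intro hi1n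
      rcases lt_or_eq_of_le hb'a' with h | h
      · exact h
      · exfalso
        have hg2 : Int.gcd (P (i+1)).2 (P (i+1)).2 = 1 := by rw [← h] at hgcd'; exact hgcd'
        rw [Int.gcd_self] at hg2
        have h1 := Int.natAbs_eq_iff.mp hg2
        have hb1 : (P (i+1)).2 = 1 := by
          rcases h1 with h1 | h1 <;> omega
        exact hPne (i+1) hi1n (Prod.ext_iff.mpr ⟨by omega, hb1⟩)
  -- num/den of slopes
  have hnumden : ∀ i, i ≤ n → (chainSlope P i).num = -(P i).1 ∧
      ((chainSlope P i).den : ℤ) = (P i).2 := by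
    intro i hi
    obtain ⟨h1, _, h3, -⟩ := hfacts i hi
    exact slope_eq h1 h3
  -- one-step strict monotonicity
  have hstep_lt : ∀ i < n, chainSlope P i < chainSlope P (i+1) := by
    intro i hi
    obtain ⟨heq, ha'0, ha'a, hb'0, hb'b⟩ := hPstep i hi
    obtain ⟨hb, -, -, -⟩ := hfacts i (le_of_lt hi)
    obtain ⟨hb2, -, -, -⟩ := hfacts (i+1) hi
    exact slope_lt_slope hb hb2 (by linarith)
  -- strict monotonicity
  have hmono : ∀ i j, i < j → j ≤ n → chainSlope P i < chainSlope P j := by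
    intro i j
    induction j with
    | zero => omega
    | succ j ih =>
      intro hij hj
      rcases Nat.lt_or_ge i j with h | h
      · exact (ih h (by omega)).trans (hstep_lt j (by omega))
      · have : i = j := by omega
        subst this
        exact hstep_lt i (by omega)
  have hmono' : ∀ i j, i ≤ j → j ≤ n → chainSlope P i ≤ chainSlope P j := by
    intro i j hij hj
    rcases eq_or_lt_of_le hij with rfl | h
    · exact le_refl _
    · exact (hmono i j h hj).le
  have hS0 : chainSlope P 0 = -(p : ℚ) / (q : ℚ) := by
    unfold chainSlope; rw [hP0]
  have hSn : chainSlope P n = -1 := by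
    unfold chainSlope; rw [hPn]; norm_num
  -- Part A
  have hadjstep : ∀ i < n, FareyAdj (chainSlope P i) (chainSlope P (i+1)) := by
    intro i hi
    obtain ⟨heq, ha'0, ha'a, hb'0, hb'b⟩ := hPstep i hi
    refine ⟨ne_of_lt (hstep_lt i hi), ?_⟩
    obtain ⟨hn1, hd1⟩ := hnumden i (le_of_lt hi)
    obtain ⟨hn2, hd2⟩ := hnumden (i+1) hi
    rw [hn1, hd1, hn2, hd2]
    have hval : -(P i).1 * (P (i+1)).2 - -(P (i+1)).1 * (P i).2 = -1 := by
      linear_combination -heq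
    rw [hval]
    rfl
  -- Part B
  have hB : ∀ i ≤ n, -(p : ℚ) / (q : ℚ) ≤ chainSlope P i ∧ chainSlope P i ≤ -1 := by
    intro i hi
    constructor
    · rw [← hS0]; exact hmono' 0 i (Nat.zero_le _) hi
    · rw [← hSn]; exact hmono' i n hi le_rfl
  refine ⟨hadjstep, hB, ?_⟩
  -- Part C
  have hg_mono : ∀ y z : ℚ, y ≤ z → gcount P n y ≤ gcount P n z := by
    intro y z hyz
    apply Finset.card_le_card
    intro k hk
    simp only [Finset.mem_filter, Finset.mem_range] at hk ⊢
    exact ⟨hk.1, lt_of_lt_of_le hk.2 hyz⟩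
  have hg_at : ∀ k ≤ n, gcount P n (chainSlope P k) = k := by
    intro k hk
    have hset : (Finset.range (n + 1)).filter (fun j => chainSlope P j < chainSlope P k)
        = Finset.range k := by
      ext j
      simp only [Finset.mem_filter, Finset.mem_range]
      constructor
      · rintro ⟨hj, hlt⟩
        by_contra hge
        push_neg at hge
        exact absurd hlt (not_lt.mpr (hmono' k j hge (by omega)))
      · intro hjk
        exact ⟨by omega, hmono j k hjk hk⟩
    unfold gcount
    rw [hset, Finset.card_range]
  have hnoskip : ∀ y z : ℚ, FareyAdj y z → y < z → chainSlope P 0 ≤ y → z ≤ -1 →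
      ∀ k ≤ n, ¬(y < chainSlope P k ∧ chainSlope P k < z) := by
    rintro y z hadj hyz hy0 hz1 k hk ⟨hyk, hkz⟩
    have hTne : ((Finset.range (n + 1)).filter (fun j => chainSlope P j ≤ y)).Nonempty := by
      refine ⟨0, ?_⟩
      simp only [Finset.mem_filter, Finset.mem_range]
      exact ⟨by omega, hy0⟩
    set T := (Finset.range (n + 1)).filter (fun j => chainSlope P j ≤ y) with hT
    set j := T.max' hTne with hjdef
    have hjT : j ∈ T := T.max'_mem hTne
    rw [hT, Finset.mem_filter, Finset.mem_range] at hjT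
    obtain ⟨hjn, hjy⟩ := hjT
    have hjk : j < k := by
      by_contra hc
      push_neg at hc
      exact absurd hyk (not_lt.mpr (le_trans (hmono' k j hc (by omega)) hjy))
    have hjn' : j < n := by omega
    have hj1y : y < chainSlope P (j+1) := by
      by_contra hc
      push_neg at hc
      have hmem : j + 1 ∈ T := by
        rw [hT, Finset.mem_filter, Finset.mem_range]
        exact ⟨by omega, hc⟩
      have := T.le_max' (j+1) hmem
      omega
    have hj1z : chainSlope P (j+1) < z :=
      lt_of_le_of_lt (hmono' (j+1) k (by omega) (by omega)) hkz
    rcases eq_or_lt_of_le hjy with heqy | hlty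
    · obtain ⟨heqB, ha'0, ha'a, hb'0, hb'b⟩ := hPstep j hjn'
      obtain ⟨hbj, -, hgj, -⟩ := hfacts j (by omega)
      have hadj' : FareyAdj (chainSlope P j) z := by rw [heqy]; exact hadj
      have hlt' : chainSlope P j < z := by rw [heqy]; exact hyz
      have hzle : z ≤ chainSlope P (j+1) :=
        neighbor_le hbj hgj heqB ha'0 ha'a hb'0 hadj' hlt' hz1
      exact absurd hzle (not_le.mpr hj1z)
    · exact farey_cross (hadjstep j hjn') hadj hlty hj1y hj1z
  have hg_step : ∀ y z : ℚ, FareyAdj y z → y < z → chainSlope P 0 ≤ y → z ≤ -1 →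
      gcount P n z ≤ gcount P n y + 1 := by
    intro y z hadj hyz hy0 hz1
    have hsub : (Finset.range (n + 1)).filter (fun k => chainSlope P k < z) ⊆
        (Finset.range (n + 1)).filter (fun k => chainSlope P k < y) ∪
        (Finset.range (n + 1)).filter (fun k => chainSlope P k = y) := by
      intro k hk
      simp only [Finset.mem_filter, Finset.mem_range, Finset.mem_union] at hk ⊢
      obtain ⟨hkn, hkz⟩ := hk
      rcases lt_trichotomy (chainSlope P k) y with h | h | h
      · exact Or.inl ⟨hkn, h⟩
      · exact Or.inr ⟨hkn, h⟩
      · exact absurd ⟨h, hkz⟩ (hnoskip y z hadj hyz hy0 hz1 k (by omega))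
    have hone : ((Finset.range (n + 1)).filter (fun k => chainSlope P k = y)).card ≤ 1 := by
      apply Finset.card_le_one.mpr
      intro a ha b hb
      simp only [Finset.mem_filter, Finset.mem_range] at ha hb
      by_contra hne
      rcases Nat.lt_or_ge a b with h | h
      · have := hmono a b h (by omega)
        rw [ha.2, hb.2] at this
        exact lt_irrefl _ this
      · have hba : b < a := by omega
        have := hmono b a hba (by omega)
        rw [ha.2, hb.2] at this
        exact lt_irrefl _ this
    have h1 := Finset.card_le_card hsub
    have h2 := Finset.card_union_le
      ((Finset.range (n + 1)).filter (fun k => chainSlope P k < y))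
      ((Finset.range (n + 1)).filter (fun k => chainSlope P k = y))
    unfold gcount
    omega
  intro m f hf0 hfm hfadj hfbox
  have hfbox' : ∀ i ≤ m, chainSlope P 0 ≤ f i ∧ f i ≤ -1 := by
    intro i hi
    rw [hS0]
    exact hfbox i hi
  have hgf0 : gcount P n (f 0) = 0 := by
    rw [hf0, ← hS0]
    exact hg_at 0 (by omega)
  have hgfm : gcount P n (f m) = n := by
    rw [hfm, ← hSn]
    exact hg_at n le_rfl
  have hstepbound : ∀ i < m, gcount P n (f (i+1)) ≤ gcount P n (f i) + 1 := by
    intro i hi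
    rcases le_or_gt (f (i+1)) (f i) with h | h
    · exact le_trans (hg_mono _ _ h) (by omega)
    · exact hg_step (f i) (f (i+1)) (hfadj i hi) h (hfbox' i (by omega)).1
        (hfbox' (i+1) hi).2
  have hub : ∀ i ≤ m, gcount P n (f i) ≤ i := by
    intro i
    induction i with
    | zero => intro _; omega
    | succ i ih =>
      intro hi
      have h1 := hstepbound i (by omega)
      have h2 := ih (by omega)
      omega
  have hnm : n ≤ m := by
    have := hub m le_rfl
    omega
  refine ⟨hnm, ?_⟩
  intro hmn
  subst hmn
  have hlb : ∀ d ≤ m, m ≤ gcount P m (f (m - d)) + d := by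
    intro d
    induction d with
    | zero =>
      intro _
      simp only [Nat.sub_zero]
      omega
    | succ d ih =>
      intro hd
      have h1 := ih (by omega)
      have heq2 : m - d = (m - (d+1)) + 1 := by omega
      have h2 := hstepbound (m - (d+1)) (by omega)
      rw [← heq2] at h2
      omega
  have hgexact : ∀ i ≤ m, gcount P m (f i) = i := by
    intro i hi
    have h1 := hub i hi
    have h2 := hlb (m - i) (by omega)
    rw [show m - (m - i) = i by omega] at h2
    omega
  intro i hi
  rcases Nat.lt_or_ge i m with hilt | hige
  · have hgi := hgexact i (by omega)
    have hgi1 := hgexact (i+1) (by omega)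
    have horder : f i < f (i+1) := by
      rcases lt_trichotomy (f i) (f (i+1)) with h | h | h
      · exact h
      · exfalso; rw [h] at hgi; omega
      · exfalso
        have := hg_mono _ _ (le_of_lt h)
        omega
    have hsub2 : (Finset.range (m + 1)).filter (fun k => chainSlope P k < f i) ⊆
        (Finset.range (m + 1)).filter (fun k => chainSlope P k < f (i+1)) := by
      intro k hk
      simp only [Finset.mem_filter, Finset.mem_range] at hk ⊢
      exact ⟨hk.1, hk.2.trans horder⟩
    have hcard : ((Finset.range (m + 1)).filter (fun k => chainSlope P k < f i)).card <
        ((Finset.range (m + 1)).filter (fun k => chainSlope P k < f (i+1))).card := by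
      unfold gcount at hgi hgi1
      omega
    have hss : (Finset.range (m + 1)).filter (fun k => chainSlope P k < f i) ⊂
        (Finset.range (m + 1)).filter (fun k => chainSlope P k < f (i+1)) :=
      Finset.ssubset_iff_subset_ne.mpr ⟨hsub2, fun h => by rw [h] at hcard; omega⟩
    obtain ⟨k, hkmem, hknot⟩ := Finset.exists_of_ssubset hss
    simp only [Finset.mem_filter, Finset.mem_range] at hkmem hknot
    obtain ⟨hkn, hkz⟩ := hkmem
    have hky : f i ≤ chainSlope P k := by
      by_contra hc
      push_neg at hc
      exact hknot ⟨hkn, hc⟩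
    have hkeq : chainSlope P k = f i := by
      rcases eq_or_lt_of_le hky with h | h
      · exact h.symm
      · exact absurd ⟨h, hkz⟩
          (hnoskip (f i) (f (i+1)) (hfadj i hilt) horder (hfbox' i (by omega)).1
            (hfbox' (i+1) (by omega)).2 k (by omega))
    have hki : k = i := by
      have hgk := hg_at k (by omega)
      rw [hkeq] at hgk
      omega
    subst hki
    exact hkeq.symm
  · have hieq : i = m := by omega
    rw [hieq, hfm, hSn]
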